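/- Let d ≥ 1, k ≥ 1, H ≥ 1, λ̃ > 0 and λ_y ≥ 0. Let Λ be a real symmetric positive definite d×d matrix such that Λ − λ̃ I and Λ − Σ_{i=1}^{k-1} φ_i φ_iᵀ are both positive semidefinite, where φ_1, …, φ_{k-1} ∈ ℝ^d satisfy ‖φ_i‖₂ ≤ 1. Let c_1, …, c_{k-1} be reals with |c_i| ≤ H + 1, and let η ∈ ℝ^d with ‖η‖₂ ≤ λ_y. Then ‖Λ^{-1}(Σ_{i=1}^{k-1} c_i φ_i + η)‖₂ ≤ 2H √(d(k-1)/λ̃) + λ_y/λ̃. -/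

import Mathlib

open scoped BigOperators Matrix

lemma weight_norm_bound_cs_sqrt {ι : Type*} (s : Finset ι) (f g : ι → ℝ) :
    ∑ i ∈ s, f i * g i ≤ Real.sqrt (∑ i ∈ s, f i ^ 2) * Real.sqrt (∑ i ∈ s, g i ^ 2) := by
  have h := Finset.sum_mul_sq_le_sq_mul_sq s f g
  have hA : Real.sqrt (∑ i ∈ s, f i ^ 2) ^ 2 = ∑ i ∈ s, f i ^ 2 :=
    Real.sq_sqrt (Finset.sum_nonneg fun i _ => sq_nonneg _)
  have hB : Real.sqrt (∑ i ∈ s, g i ^ 2) ^ 2 = ∑ i ∈ s, g i ^ 2 :=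
    Real.sq_sqrt (Finset.sum_nonneg fun i _ => sq_nonneg _)
  nlinarith [mul_nonneg (Real.sqrt_nonneg (∑ i ∈ s, f i ^ 2))
    (Real.sqrt_nonneg (∑ i ∈ s, g i ^ 2))]

/-- Noise part: if `lam‖x‖² ≤ ⟪x, η⟫` and `‖η‖ ≤ lamy` then `‖x‖ ≤ lamy/lam`. -/
lemma weight_norm_bound_noise {d : ℕ} {lam lamy : ℝ} (hlam : 0 < lam) (hlamy : 0 ≤ lamy)
    (x η : Fin d → ℝ) (hq : lam * ∑ j, x j ^ 2 ≤ ∑ j, x j * η j)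
    (hη : Real.sqrt (∑ j, η j ^ 2) ≤ lamy) :
    Real.sqrt (∑ j, x j ^ 2) ≤ lamy / lam := by
  set S := ∑ j, x j ^ 2 with hS
  have hS0 : 0 ≤ S := Finset.sum_nonneg fun i _ => sq_nonneg _
  have hs2 : Real.sqrt S ^ 2 = S := Real.sq_sqrt hS0
  have h3 : ∑ j, x j * η j ≤ Real.sqrt S * lamy :=
    le_trans (weight_norm_bound_cs_sqrt Finset.univ x η)
      (mul_le_mul_of_nonneg_left hη (Real.sqrt_nonneg _))
  rcases eq_or_lt_of_le (Real.sqrt_nonneg S) with h0 | h0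
  · rw [← h0]; positivity
  · rw [le_div_iff₀ hlam]
    nlinarith

/-- Signal part. -/
lemma weight_norm_bound_signal {d m : ℕ} {H lam : ℝ} (hH : 1 ≤ H) (hlam : 0 < lam)
    (x : Fin d → ℝ) (a : Fin m → ℝ) (c : Fin m → ℝ) (hc : ∀ i, |c i| ≤ H + 1)
    (hq : lam * ∑ j, x j ^ 2 ≤ ∑ i, c i * a i)
    (h5 : ∑ i, a i ^ 2 ≤ ∑ i, c i * a i) :
    Real.sqrt (∑ j, x j ^ 2) ≤ (H + 1) * Real.sqrt ((m : ℝ) / lam) := by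
  set S := ∑ j, x j ^ 2 with hS
  set t := ∑ i, c i * a i with ht
  have hS0 : 0 ≤ S := Finset.sum_nonneg fun i _ => sq_nonneg _
  have ht0 : 0 ≤ t := le_trans (by positivity) hq
  have hA0 : (0 : ℝ) ≤ ∑ i, a i ^ 2 := Finset.sum_nonneg fun i _ => sq_nonneg _
  have h3 : t ≤ (H + 1) * (Real.sqrt (m : ℝ) * Real.sqrt t) := by
    have hstep : t ≤ (H + 1) * ∑ i, |a i| := by
      rw [ht, Finset.mul_sum]
      refine Finset.sum_le_sum fun i _ => ?_
      calc c i * a i ≤ |c i * a i| := le_abs_self _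
        _ = |c i| * |a i| := abs_mul _ _
        _ ≤ (H + 1) * |a i| := mul_le_mul_of_nonneg_right (hc i) (abs_nonneg _)
    have habs : ∑ i, |a i| ≤ Real.sqrt (∑ i, a i ^ 2) * Real.sqrt (m : ℝ) := by
      have := weight_norm_bound_cs_sqrt Finset.univ (fun i => |a i|) (fun _ => (1 : ℝ))
      simpa [sq_abs] using this
    have hsq : Real.sqrt (∑ i, a i ^ 2) ≤ Real.sqrt t := Real.sqrt_le_sqrt h5
    have h4 : ∑ i, |a i| ≤ Real.sqrt t * Real.sqrt (m : ℝ) :=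
      le_trans habs (mul_le_mul_of_nonneg_right hsq (Real.sqrt_nonneg _))
    calc t ≤ (H + 1) * ∑ i, |a i| := hstep
      _ ≤ (H + 1) * (Real.sqrt (m : ℝ) * Real.sqrt t) := by
          refine mul_le_mul_of_nonneg_left ?_ (by linarith)
          rw [mul_comm]; exact h4
  have hst : Real.sqrt t ≤ (H + 1) * Real.sqrt (m : ℝ) := by
    have hts : Real.sqrt t ^ 2 = t := Real.sq_sqrt ht0
    rcases eq_or_lt_of_le (Real.sqrt_nonneg t) with h0 | h0
    · rw [← h0]; positivity
    · nlinarith [Real.sqrt_nonneg (m : ℝ)]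
  have hR0 : 0 ≤ (H + 1) * Real.sqrt ((m : ℝ) / lam) := by positivity
  have hSle : S ≤ ((H + 1) * Real.sqrt ((m : ℝ) / lam)) ^ 2 := by
    rw [mul_pow, Real.sq_sqrt (by positivity)]
    have htle : t ≤ (H + 1) ^ 2 * (m : ℝ) := by
      have hts : Real.sqrt t ^ 2 = t := Real.sq_sqrt ht0
      have hm2 : Real.sqrt (m : ℝ) ^ 2 = (m : ℝ) := Real.sq_sqrt (by positivity)
      nlinarith [Real.sqrt_nonneg t, Real.sqrt_nonneg (m : ℝ)]
    rw [← mul_div_assoc, le_div_iff₀ hlam]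
    calc S * lam = lam * S := mul_comm _ _
      _ ≤ t := hq
      _ ≤ (H + 1) ^ 2 * (m : ℝ) := htle
  calc Real.sqrt S ≤ Real.sqrt (((H + 1) * Real.sqrt ((m : ℝ) / lam)) ^ 2) :=
        Real.sqrt_le_sqrt hSle
    _ = (H + 1) * Real.sqrt ((m : ℝ) / lam) := Real.sqrt_sq hR0

lemma weight_norm_bound_sum_mulVec {d : ℕ} {ι : Type*} (s : Finset ι)
    (M : ι → Matrix (Fin d) (Fin d) ℝ) (x : Fin d → ℝ) :
    (∑ i ∈ s, M i) *ᵥ x = ∑ i ∈ s, M i *ᵥ x := by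
  ext j
  simp [Matrix.mulVec, dotProduct, Finset.sum_apply, Matrix.sum_apply, Finset.sum_mul]
  rw [Finset.sum_comm]

lemma weight_norm_bound_dot_sum {d : ℕ} {ι : Type*} (s : Finset ι)
    (x : Fin d → ℝ) (f : ι → Fin d → ℝ) :
    x ⬝ᵥ (∑ i ∈ s, f i) = ∑ i ∈ s, x ⬝ᵥ f i := by
  simp [dotProduct, Finset.sum_apply, Finset.mul_sum]
  rw [Finset.sum_comm]

lemma weight_norm_bound_quad_vecMulVec {d : ℕ} (a x : Fin d → ℝ) :
    x ⬝ᵥ (Matrix.vecMulVec a a *ᵥ x) = (a ⬝ᵥ x) ^ 2 := by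
  have h : Matrix.vecMulVec a a *ᵥ x = (a ⬝ᵥ x) • a := by
    ext i
    simp [Matrix.mulVec, Matrix.vecMulVec_apply, dotProduct, Finset.mul_sum,
      Finset.sum_mul, mul_comm, mul_left_comm]
  rw [h, dotProduct_smul, smul_eq_mul, dotProduct_comm, sq]

/-- Triangle inequality for the Euclidean norm written via square roots of sums. -/
lemma weight_norm_bound_tri {d : ℕ} (a b : Fin d → ℝ) :
    Real.sqrt (∑ j, (a j + b j) ^ 2) ≤
      Real.sqrt (∑ j, a j ^ 2) + Real.sqrt (∑ j, b j ^ 2) := by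
  have hcs := weight_norm_bound_cs_sqrt Finset.univ a b
  have hA : Real.sqrt (∑ j, a j ^ 2) ^ 2 = ∑ j, a j ^ 2 :=
    Real.sq_sqrt (Finset.sum_nonneg fun i _ => sq_nonneg _)
  have hB : Real.sqrt (∑ j, b j ^ 2) ^ 2 = ∑ j, b j ^ 2 :=
    Real.sq_sqrt (Finset.sum_nonneg fun i _ => sq_nonneg _)
  have h1 : ∑ j, (a j + b j) ^ 2 ≤
      (Real.sqrt (∑ j, a j ^ 2) + Real.sqrt (∑ j, b j ^ 2)) ^ 2 := by
    have he : ∑ j, (a j + b j) ^ 2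
        = ∑ j, a j ^ 2 + 2 * ∑ j, a j * b j + ∑ j, b j ^ 2 := by
      rw [Finset.mul_sum, ← Finset.sum_add_distrib, ← Finset.sum_add_distrib]
      exact Finset.sum_congr rfl fun j _ => by ring
    nlinarith
  calc Real.sqrt (∑ j, (a j + b j) ^ 2) ≤
      Real.sqrt ((Real.sqrt (∑ j, a j ^ 2) + Real.sqrt (∑ j, b j ^ 2)) ^ 2) :=
        Real.sqrt_le_sqrt h1
    _ = _ := Real.sqrt_sq (by positivity)

/-- Bound on the norm of the private regression weights
`w = Λ^{-1}(Σ c_i φ_i + η)` (Lemma B.2 of Jin et al. 2020, privatized version):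
if `Λ ⪰ λ̃ I`, `Λ` dominates the empirical Gram matrix `Σ φ_i φ_iᵀ`, targets satisfy
`|c_i| ≤ H + 1`, and the noise satisfies `‖η‖₂ ≤ λ_y`, then
`‖w‖₂ ≤ 2H √(d(k-1)/λ̃) + λ_y/λ̃`. -/
theorem weight_norm_bound (d k : ℕ) (hd : 1 ≤ d) (hk : 1 ≤ k)
    (H lam lamy : ℝ) (hH : 1 ≤ H) (hlam : 0 < lam) (hlamy : 0 ≤ lamy)
    (Λ : Matrix (Fin d) (Fin d) ℝ) (hΛ : Λ.PosDef)
    (hreg : (Λ - lam • (1 : Matrix (Fin d) (Fin d) ℝ)).PosSemidef)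
    (φ : Fin (k - 1) → Fin d → ℝ)
    (hφ : ∀ i, Real.sqrt (∑ j, φ i j ^ 2) ≤ 1)
    (hdom : (Λ - ∑ i, Matrix.vecMulVec (φ i) (φ i)).PosSemidef)
    (c : Fin (k - 1) → ℝ) (hc : ∀ i, |c i| ≤ H + 1)
    (η : Fin d → ℝ) (hη : Real.sqrt (∑ j, η j ^ 2) ≤ lamy) :
    Real.sqrt (∑ j, (Λ⁻¹ *ᵥ ((∑ i, c i • φ i) + η)) j ^ 2) ≤
      2 * H * Real.sqrt ((d : ℝ) * ((k : ℝ) - 1) / lam) + lamy / lam := by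
  have hmcast : ((k : ℝ) - 1) = ((k - 1 : ℕ) : ℝ) := by
    rw [Nat.cast_sub hk]; norm_num
  -- inverse identity
  have hinv : Λ * Λ⁻¹ = 1 := Matrix.mul_nonsing_inv Λ hΛ.det_pos.ne'.isUnit
  have hid : ∀ y : Fin d → ℝ, Λ *ᵥ (Λ⁻¹ *ᵥ y) = y := by
    intro y; rw [Matrix.mulVec_mulVec, hinv, Matrix.one_mulVec]
  -- lower quadratic bound from hreg
  have hlow : ∀ x : Fin d → ℝ, lam * ∑ j, x j ^ 2 ≤ x ⬝ᵥ (Λ *ᵥ x) := by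
    intro x
    have h := hreg.dotProduct_mulVec_nonneg x
    rw [Matrix.sub_mulVec, Matrix.smul_mulVec, Matrix.one_mulVec] at h
    simp only [star_trivial, dotProduct_sub, dotProduct_smul,
      smul_eq_mul] at h
    have hxx : x ⬝ᵥ x = ∑ j, x j ^ 2 := by simp [dotProduct, sq]
    rw [hxx] at h
    linarith
  -- noise part
  obtain ⟨v, hvdef⟩ : ∃ v, v = Λ⁻¹ *ᵥ η := ⟨_, rfl⟩
  have hvb : Real.sqrt (∑ j, v j ^ 2) ≤ lamy / lam := by
    refine weight_norm_bound_noise hlam hlamy v η ?_ hη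
    have h1 := hlow v
    have h2 : v ⬝ᵥ (Λ *ᵥ v) = ∑ j, v j * η j := by
      rw [hvdef, hid η]; rfl
    rw [h2] at h1
    exact h1
  -- signal part
  obtain ⟨u, hudef⟩ : ∃ u, u = Λ⁻¹ *ᵥ (∑ i, c i • φ i) := ⟨_, rfl⟩
  have hub : Real.sqrt (∑ j, u j ^ 2)
      ≤ (H + 1) * Real.sqrt (((k - 1 : ℕ) : ℝ) / lam) := by
    have hqid : u ⬝ᵥ (Λ *ᵥ u) = ∑ i, c i * (u ⬝ᵥ φ i) := by
      rw [hudef, hid, weight_norm_bound_dot_sum]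
      exact Finset.sum_congr rfl fun i _ => by
        rw [dotProduct_smul, smul_eq_mul]
    refine weight_norm_bound_signal hH hlam u (fun i => u ⬝ᵥ φ i) c hc ?_ ?_
    · have h1 := hlow u
      rw [hqid] at h1
      exact h1
    · have h := hdom.dotProduct_mulVec_nonneg u
      rw [Matrix.sub_mulVec, weight_norm_bound_sum_mulVec] at h
      simp only [star_trivial, dotProduct_sub] at h
      rw [weight_norm_bound_dot_sum] at h
      have he : ∑ i, u ⬝ᵥ (Matrix.vecMulVec (φ i) (φ i) *ᵥ u) = ∑ i, (u ⬝ᵥ φ i) ^ 2 :=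
        Finset.sum_congr rfl fun i _ => by
          rw [weight_norm_bound_quad_vecMulVec, dotProduct_comm]
      rw [he, hqid] at h
      linarith
  -- combine
  have hw : Λ⁻¹ *ᵥ ((∑ i, c i • φ i) + η) = fun j => u j + v j := by
    rw [Matrix.mulVec_add, hudef, hvdef]; rfl
  rw [hw]
  have hfinal : (H + 1) * Real.sqrt (((k - 1 : ℕ) : ℝ) / lam)
      ≤ 2 * H * Real.sqrt ((d : ℝ) * ((k : ℝ) - 1) / lam) := by
    rw [hmcast]
    have hsq : Real.sqrt (((k - 1 : ℕ) : ℝ) / lam)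
        ≤ Real.sqrt ((d : ℝ) * ((k - 1 : ℕ) : ℝ) / lam) := by
      apply Real.sqrt_le_sqrt
      rw [div_le_div_iff_of_pos_right hlam]
      have h1 : (1 : ℝ) ≤ (d : ℝ) := by exact_mod_cast hd
      nlinarith [Nat.cast_nonneg (α := ℝ) (k - 1)]
    have hH2 : H + 1 ≤ 2 * H := by linarith
    exact mul_le_mul hH2 hsq (Real.sqrt_nonneg _) (by linarith)
  calc Real.sqrt (∑ j, (u j + v j) ^ 2)
      ≤ Real.sqrt (∑ j, u j ^ 2) + Real.sqrt (∑ j, v j ^ 2) := weight_norm_bound_tri u v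
    _ ≤ (H + 1) * Real.sqrt (((k - 1 : ℕ) : ℝ) / lam) + lamy / lam := add_le_add hub hvb
    _ ≤ 2 * H * Real.sqrt ((d : ℝ) * ((k : ℝ) - 1) / lam) + lamy / lam :=
        add_le_add_left hfinal _
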